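/- In Bienstock's variable gadget (vertices c_{i,1}, c_{i,2}, c_{i,3}, c_{i,4}, t_{i,1}, t_{i,2}, t_{i,3}, t_{i,4}, f_{i,1}, f_{i,2}, f_{i,3}, f_{i,4} with blue edges t_{i,1}c_{i,3}, c_{i,3}f_{i,1}, f_{i,1}c_{i,1}, c_{i,1}t_{i,1}, and the path c_{i,2}t_{i,2}, t_{i,2}t_{i,3}, t_{i,3}t_{i,4}, t_{i,4}c_{i,4}, c_{i,4}f_{i,4}, f_{i,4}f_{i,3}, f_{i,3}f_{i,2}, f_{i,2}c_{i,2}, and red edges f_{i,2}t_{i,1}, t_{i,1}f_{i,3}, f_{i,3}t_{i,3}, t_{i,3}f_{i,1}, f_{i,1}t_{i,2}), any induced path from c_{i,1} to c_{i,3} avoiding red-edge-adjacent conflicts within the gadget and not using c_{i,2}, c_{i,4} is either c_{i,1}–t_{i,1}–c_{i,3} or c_{i,1}–f_{i,1}–c_{i,3}. -/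

import Mathlib

def variableGadget : SimpleGraph (Fin 12) :=
  SimpleGraph.fromEdgeSet
    {s((4 : Fin 12), 2), s((2 : Fin 12), 8), s((8 : Fin 12), 0), s((0 : Fin 12), 4),
     s((1 : Fin 12), 5), s((5 : Fin 12), 6), s((6 : Fin 12), 7), s((7 : Fin 12), 3),
     s((3 : Fin 12), 11), s((11 : Fin 12), 10), s((10 : Fin 12), 9), s((9 : Fin 12), 1),
     s((9 : Fin 12), 4), s((4 : Fin 12), 10), s((10 : Fin 12), 6), s((6 : Fin 12), 8),
     s((8 : Fin 12), 5)}

lemma gadget_aux_nbr (v : Fin 12) (h : variableGadget.Adj 0 v) : v = 4 ∨ v = 8 := by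
  simp only [variableGadget, SimpleGraph.fromEdgeSet_adj, Set.mem_insert_iff,
    Set.mem_singleton_iff, Sym2.eq_iff] at h
  obtain ⟨h, -⟩ := h
  rcases h with (⟨h1,h2⟩|⟨h1,h2⟩)|(⟨h1,h2⟩|⟨h1,h2⟩)|(⟨h1,h2⟩|⟨h1,h2⟩)|(⟨h1,h2⟩|⟨h1,h2⟩)|(⟨h1,h2⟩|⟨h1,h2⟩)|(⟨h1,h2⟩|⟨h1,h2⟩)|(⟨h1,h2⟩|⟨h1,h2⟩)|(⟨h1,h2⟩|⟨h1,h2⟩)|(⟨h1,h2⟩|⟨h1,h2⟩)|(⟨h1,h2⟩|⟨h1,h2⟩)|(⟨h1,h2⟩|⟨h1,h2⟩)|(⟨h1,h2⟩|⟨h1,h2⟩)|(⟨h1,h2⟩|⟨h1,h2⟩)|(⟨h1,h2⟩|⟨h1,h2⟩)|(⟨h1,h2⟩|⟨h1,h2⟩)|(⟨h1,h2⟩|⟨h1,h2⟩)|(⟨h1,h2⟩|⟨h1,h2⟩) <;>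
    first | (exact absurd h1 (by decide)) | (subst h2; simp)

lemma gadget_aux_adj42 : variableGadget.Adj 4 2 := by
  rw [variableGadget, SimpleGraph.fromEdgeSet_adj]
  refine ⟨?_, by decide⟩
  simp only [Set.mem_insert_iff]; tauto

lemma gadget_aux_adj82 : variableGadget.Adj 8 2 := by
  rw [variableGadget, SimpleGraph.fromEdgeSet_adj]
  refine ⟨?_, by decide⟩
  simp only [Set.mem_insert_iff]
  right; left
  rw [Sym2.eq_swap]

lemma gadget_aux_single {V : Type*} {G : SimpleGraph V} {u v : V} (w : G.Walk u v)
    (hw : w.IsPath) (he : s(u, v) ∈ w.edges) : w.support = [u, v] := by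
  cases w with
  | nil => simp at he
  | @cons _ b _ h q =>
    simp only [SimpleGraph.Walk.edges_cons, List.mem_cons] at he
    rcases he with he | he
    · have hb : b = v := by
        rw [Sym2.eq_iff] at he
        rcases he with ⟨_, rfl⟩ | ⟨h1, _⟩
        · rfl
        · exact absurd h1 h.ne
      subst hb
      have hq : q = SimpleGraph.Walk.nil := SimpleGraph.Walk.isPath_iff_eq_nil.mp hw.of_cons
      subst hq; simp
    · have hu : u ∈ q.support := SimpleGraph.Walk.fst_mem_support_of_mem_edges q he
      rw [SimpleGraph.Walk.cons_isPath_iff] at hw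
      exact absurd hu hw.2

/-- In the variable gadget, any induced path from `c_{i,1}` to `c_{i,3}` avoiding
`c_{i,2}` and `c_{i,4}` is either `c_{i,1}–t_{i,1}–c_{i,3}` or `c_{i,1}–f_{i,1}–c_{i,3}`. -/
theorem variableGadget_induced_paths
    (p : variableGadget.Walk 0 2) (hp : p.IsPath)
    (hind : ∀ x y, x ∈ p.support → y ∈ p.support → variableGadget.Adj x y →
      s(x, y) ∈ p.edges)
    (hc2 : (1 : Fin 12) ∉ p.support) (hc4 : (3 : Fin 12) ∉ p.support) :
    p.support = [0, 4, 2] ∨ p.support = [0, 8, 2] := by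
  cases p with
  | @cons _ b _ h q =>
    have hb : b = 4 ∨ b = 8 := gadget_aux_nbr b h
    have hbsup : b ∈ (SimpleGraph.Walk.cons h q).support := by simp
    have h2sup : (2 : Fin 12) ∈ (SimpleGraph.Walk.cons h q).support :=
      SimpleGraph.Walk.end_mem_support _
    have hadj : variableGadget.Adj b 2 := by
      rcases hb with rfl | rfl
      · exact gadget_aux_adj42
      · exact gadget_aux_adj82
    have hedge := hind b 2 hbsup h2sup hadj
    simp only [SimpleGraph.Walk.edges_cons, List.mem_cons] at hedge
    have hne : s(b, (2 : Fin 12)) ≠ s((0 : Fin 12), b) := by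
      rcases hb with rfl | rfl <;> decide
    rcases hedge with hedge | hedge
    · exact absurd hedge hne
    · have hsup : q.support = [b, 2] :=
        gadget_aux_single q hp.of_cons hedge
      rcases hb with rfl | rfl
      · left; simp [hsup]
      · right; simp [hsup]
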